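/- For all natural numbers a, b, N with N ≤ a and N ≤ b, the sequence k ↦ Σ_{i+j=N, 0≤i≤a, 0≤j≤b} C(a,i) C(b,j) C(N+j+c, k) is log-concave in k for any natural number c; that is, setting S_k = Σ_{j=0}^N C(a, N-j) C(b, j) C(N+j+c, k), one has S_k^2 ≥ S_{k-1} S_{k+1} for all k ≥ 1. -/

import Mathlib

open Finset

-- log-concavity of binomial rows
lemma row_lc (n k : ℕ) : n.choose k * n.choose (k+2) ≤ n.choose (k+1)^2 := by
  have h1 : n.choose (k+1) * (k+1) = n.choose k * (n - k) := Nat.choose_succ_right_eq n k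
  have h2 : n.choose (k+2) * (k+2) = n.choose (k+1) * (n - (k+1)) := Nat.choose_succ_right_eq n (k+1)
  have hmono : (n - (k+1)) * (k+1) ≤ (n - k) * (k+2) :=
    Nat.mul_le_mul (Nat.sub_le_sub_left (Nat.le_succ k) n) (Nat.le_succ _)
  have key : n.choose k * n.choose (k+2) * ((k+1)*(k+2)) ≤ n.choose (k+1)^2 * ((k+1)*(k+2)) := by
    calc n.choose k * n.choose (k+2) * ((k+1)*(k+2))
        = n.choose k * (n.choose (k+2) * (k+2)) * (k+1) := by ring
      _ = n.choose k * (n.choose (k+1) * (n - (k+1))) * (k+1) := by rw [h2]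
      _ = (n.choose k * n.choose (k+1)) * ((n - (k+1)) * (k+1)) := by ring
      _ ≤ (n.choose k * n.choose (k+1)) * ((n - k) * (k+2)) := Nat.mul_le_mul_left _ hmono
      _ = (n.choose k * (n - k)) * n.choose (k+1) * (k+2) := by ring
      _ = (n.choose (k+1) * (k+1)) * n.choose (k+1) * (k+2) := by rw [h1]
      _ = n.choose (k+1)^2 * ((k+1)*(k+2)) := by ring
  exact Nat.le_of_mul_le_mul_right key (by positivity)

-- log-concavity of binomial columns
lemma col_lc (n K : ℕ) : n.choose K * (n+2).choose K ≤ (n+1).choose K ^ 2 := by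
  by_cases hK : K ≤ n
  · have h1 : n.choose K * (n+1) = (n+1).choose K * (n+1-K) := Nat.choose_mul_succ_eq n K
    have h2 : (n+1).choose K * (n+2) = (n+2).choose K * (n+2-K) := Nat.choose_mul_succ_eq (n+1) K
    have hmono : (n+1-K) * (n+2) ≤ (n+1) * (n+2-K) := by
      rw [Nat.sub_mul, Nat.mul_sub]
      exact Nat.sub_le_sub_left (by nlinarith : (n+1) * K ≤ K * (n+2)) _
    have key : n.choose K * (n+2).choose K * ((n+1)*(n+2-K)) ≤ (n+1).choose K ^2 * ((n+1)*(n+2-K)) := by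
      calc n.choose K * (n+2).choose K * ((n+1)*(n+2-K))
          = (n.choose K * (n+1)) * ((n+2).choose K * (n+2-K)) := by ring
        _ = ((n+1).choose K * (n+1-K)) * ((n+1).choose K * (n+2)) := by rw [h1, ← h2]
        _ = (n+1).choose K ^2 * ((n+1-K)*(n+2)) := by ring
        _ ≤ (n+1).choose K ^2 * ((n+1)*(n+2-K)) := Nat.mul_le_mul_left _ hmono
    exact Nat.le_of_mul_le_mul_right key (Nat.mul_pos (by omega) (by omega))
  · rw [Nat.choose_eq_zero_of_lt (by omega)]; simp

def useq (a b N : ℕ) : ℕ → ℕ := fun m => b.choose m * (a+b-m).choose (a+b-N)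

lemma useq_pos_iff {a b N : ℕ} (hNa : N ≤ a) (hNb : N ≤ b) (m : ℕ) :
    0 < useq a b N m ↔ m ≤ N := by
  unfold useq
  rw [Nat.pos_iff_ne_zero, Ne, Nat.mul_eq_zero, not_or]
  simp only [Ne, Nat.choose_eq_zero_iff, not_lt]
  omega

lemma useq_lc {a b N : ℕ} (hNa : N ≤ a) (hNb : N ≤ b) (m : ℕ) :
    useq a b N m * useq a b N (m+2) ≤ useq a b N (m+1)^2 := by
  by_cases hm : m + 2 ≤ N
  · have h1 : a + b - m = (a+b-m-2) + 2 := by omega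
    have h2 : a + b - (m+1) = (a+b-m-2) + 1 := by omega
    have h3 : a + b - (m+2) = a+b-m-2 := by omega
    unfold useq
    rw [h1, h2, h3]
    calc b.choose m * ((a+b-m-2) + 2).choose (a+b-N) *
          (b.choose (m+2) * (a+b-m-2).choose (a+b-N))
        = (b.choose m * b.choose (m+2)) *
          ((a+b-m-2).choose (a+b-N) * ((a+b-m-2)+2).choose (a+b-N)) := by ring
      _ ≤ b.choose (m+1)^2 * ((a+b-m-2)+1).choose (a+b-N)^2 :=
          Nat.mul_le_mul (row_lc b m) (col_lc (a+b-m-2) (a+b-N))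
      _ = (b.choose (m+1) * ((a+b-m-2)+1).choose (a+b-N))^2 := by ring
  · have : useq a b N (m+2) = 0 := by
      have := useq_pos_iff hNa hNb (m+2); omega
    rw [this]; simp

lemma useq_niz {a b N : ℕ} (hNa : N ≤ a) (hNb : N ≤ b) :
    ∀ i j k, i ≤ j → j ≤ k → 0 < useq a b N i → 0 < useq a b N k → 0 < useq a b N j := by
  intro i j k hij hjk _ hk
  rw [useq_pos_iff hNa hNb] at *
  omega

-- cross inequality from log-concavity + no internal zeros
lemma cross_lc (f : ℕ → ℕ)
    (hlc : ∀ k, f k * f (k+2) ≤ f (k+1)^2)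
    (hniz : ∀ i j k, i ≤ j → j ≤ k → 0 < f i → 0 < f k → 0 < f j) :
    ∀ k, f k * f (k+3) ≤ f (k+1) * f (k+2) := by
  intro k
  by_cases h1 : 0 < f (k+1)
  · by_cases h2 : 0 < f (k+2)
    · have H : (f k * f (k+3)) * (f (k+1) * f (k+2)) ≤
          (f (k+1) * f (k+2)) * (f (k+1) * f (k+2)) := by
        calc (f k * f (k+3)) * (f (k+1) * f (k+2))
            = (f k * f (k+2)) * (f (k+1) * f (k+3)) := by ring
          _ ≤ f (k+1)^2 * f (k+2)^2 := Nat.mul_le_mul (hlc k) (hlc (k+1))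
          _ = (f (k+1) * f (k+2)) * (f (k+1) * f (k+2)) := by ring
      exact Nat.le_of_mul_le_mul_right H (Nat.mul_pos h1 h2)
    · have : f k = 0 ∨ f (k+3) = 0 := by
        by_contra h
        push_neg at h
        exact h2 (hniz k (k+2) (k+3) (by omega) (by omega)
          (Nat.pos_of_ne_zero h.1) (Nat.pos_of_ne_zero h.2))
      rcases this with h | h <;> simp [h]
  · have : f k = 0 ∨ f (k+3) = 0 := by
      by_contra h
      push_neg at h
      exact h1 (hniz k (k+1) (k+3) (by omega) (by omega)
        (Nat.pos_of_ne_zero h.1) (Nat.pos_of_ne_zero h.2))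
    rcases this with h | h <;> simp [h]

lemma step_lc_niz (f g : ℕ → ℕ)
    (h0 : g 0 = f 0) (hs : ∀ k, g (k+1) = f (k+1) + f k)
    (hlc : ∀ k, f k * f (k+2) ≤ f (k+1)^2)
    (hniz : ∀ i j k, i ≤ j → j ≤ k → 0 < f i → 0 < f k → 0 < f j) :
    (∀ k, g k * g (k+2) ≤ g (k+1)^2) ∧
    (∀ i j k, i ≤ j → j ≤ k → 0 < g i → 0 < g k → 0 < g j) := by
  constructor
  · intro k
    cases k with
    | zero => rw [h0, hs 0, hs 1]; nlinarith [hlc 0]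
    | succ k =>
      rw [hs k, hs (k+1), hs (k+2)]
      nlinarith [hlc k, hlc (k+1), cross_lc f hlc hniz k]
  · intro i j k hij hjk hi hk
    by_cases hjk' : j = k
    · subst hjk'; exact hk
    · obtain ⟨i', hi'le, hi'⟩ : ∃ i', i' ≤ i ∧ 0 < f i' := by
        cases i with
        | zero => exact ⟨0, le_refl _, h0 ▸ hi⟩
        | succ n =>
          rw [hs n] at hi
          by_cases hp : 0 < f (n+1)
          · exact ⟨n+1, le_refl _, hp⟩
          · exact ⟨n, Nat.le_succ n, by omega⟩
      obtain ⟨k', hk'ge, hk'⟩ : ∃ k', j ≤ k' ∧ 0 < f k' := by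
        cases k with
        | zero => omega
        | succ n =>
          rw [hs n] at hk
          by_cases hp : 0 < f (n+1)
          · exact ⟨n+1, by omega, hp⟩
          · exact ⟨n, by omega, by omega⟩
      have hfj : 0 < f j := hniz i' j k' (le_trans hi'le hij) hk'ge hi' hk'
      cases j with
      | zero => rw [h0]; exact hfj
      | succ n => rw [hs n]; exact Nat.lt_of_lt_of_le hfj (Nat.le_add_right _ _)

def Tseq (a b N n : ℕ) : ℕ → ℕ := fun k => ∑ m ∈ range (k+1), useq a b N m * n.choose (k - m)

lemma Tseq_zero (a b N k : ℕ) : Tseq a b N 0 k = useq a b N k := by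
  unfold Tseq
  rw [Finset.sum_eq_single k]
  · simp
  · intro m hm hne
    rw [Nat.choose_eq_zero_of_lt (by simp at hm; omega)]
    simp
  · intro h; simp at h

lemma Tseq_succ_zero (a b N n : ℕ) : Tseq a b N (n+1) 0 = Tseq a b N n 0 := by
  simp [Tseq]

lemma Tseq_succ (a b N n k : ℕ) :
    Tseq a b N (n+1) (k+1) = Tseq a b N n (k+1) + Tseq a b N n k := by
  unfold Tseq
  rw [Finset.sum_range_succ, Finset.sum_range_succ (f := fun m => useq a b N m * n.choose (k+1-m))]
  have hsplit : ∀ m ∈ range (k+1),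
      useq a b N m * (n+1).choose (k+1-m)
        = useq a b N m * n.choose (k+1-m) + useq a b N m * n.choose (k-m) := by
    intro m hm
    simp only [Finset.mem_range] at hm
    have h : k + 1 - m = (k - m) + 1 := by omega
    rw [h, Nat.choose_succ_succ', Nat.mul_add]
    ring
  rw [Finset.sum_congr rfl hsplit, Finset.sum_add_distrib]
  simp [Nat.choose_zero_right]
  ring

lemma Tseq_props {a b N : ℕ} (hNa : N ≤ a) (hNb : N ≤ b) (n : ℕ) :
    (∀ k, Tseq a b N n k * Tseq a b N n (k+2) ≤ Tseq a b N n (k+1)^2) ∧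
    (∀ i j k, i ≤ j → j ≤ k → 0 < Tseq a b N n i → 0 < Tseq a b N n k → 0 < Tseq a b N n j) := by
  induction n with
  | zero =>
    constructor
    · intro k; simp only [Tseq_zero]; exact useq_lc hNa hNb k
    · simp only [Tseq_zero]; exact useq_niz hNa hNb
  | succ n ih =>
    exact step_lc_niz (Tseq a b N n) (Tseq a b N (n+1))
      (Tseq_succ_zero a b N n) (Tseq_succ a b N n) ih.1 ih.2

lemma choose_inner_sum {a b N : ℕ} (hNa : N ≤ a) (hNb : N ≤ b) (m : ℕ) :
    ∑ j ∈ range (N+1), a.choose (N-j) * b.choose j * j.choose m = useq a b N m := by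
  by_cases hm : m ≤ N
  · rw [range_eq_Ico, ← Finset.sum_Ico_consecutive _ (Nat.zero_le m) (by omega : m ≤ N+1)]
    have h1 : ∑ j ∈ Ico 0 m, a.choose (N-j) * b.choose j * j.choose m = 0 := by
      apply Finset.sum_eq_zero
      intro j hj
      simp only [Finset.mem_Ico] at hj
      rw [Nat.choose_eq_zero_of_lt (show j < m by omega)]
      ring
    rw [h1, zero_add, Finset.sum_Ico_eq_sum_range]
    have h2 : N + 1 - m = (N - m) + 1 := by omega
    rw [h2]
    have h3 : ∀ t ∈ range ((N-m)+1),
        a.choose (N-(m+t)) * b.choose (m+t) * (m+t).choose m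
          = b.choose m * ((b-m).choose t * a.choose ((N-m)-t)) := by
      intro t ht
      simp only [Finset.mem_range] at ht
      have hb : m + t ≤ b := by omega
      have hmul := Nat.choose_mul (n := b) (k := m+t) (s := m) (Nat.le_add_right m t)
      rw [Nat.add_sub_cancel_left] at hmul
      calc a.choose (N-(m+t)) * b.choose (m+t) * (m+t).choose m
          = a.choose (N-(m+t)) * (b.choose (m+t) * (m+t).choose m) := by ring
        _ = a.choose (N-(m+t)) * (b.choose m * (b-m).choose t) := by rw [hmul]
        _ = b.choose m * ((b-m).choose t * a.choose ((N-m)-t)) := by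
              rw [show N-(m+t) = (N-m)-t by omega]; ring
    rw [Finset.sum_congr rfl h3, ← Finset.mul_sum]
    have h4 : ∑ t ∈ range ((N-m)+1), (b-m).choose t * a.choose ((N-m)-t)
        = (a+b-m).choose (N-m) := by
      rw [show a+b-m = (b-m)+a by omega, Nat.add_choose_eq,
        Finset.Nat.sum_antidiagonal_eq_sum_range_succ_mk]
    rw [h4, Nat.choose_symm_of_eq_add (show a+b-m = (N-m)+(a+b-N) by omega)]
    rfl
  · have h0 : useq a b N m = 0 := by have := useq_pos_iff hNa hNb m; omega
    rw [h0]
    apply Finset.sum_eq_zero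
    intro j hj
    simp only [Finset.mem_range] at hj
    rw [Nat.choose_eq_zero_of_lt (show j < m by omega)]
    ring

lemma S_eq {a b N : ℕ} (hNa : N ≤ a) (hNb : N ≤ b) (c k : ℕ) :
    ∑ j ∈ range (N+1), a.choose (N-j) * b.choose j * (N+j+c).choose k
      = Tseq a b N (N+c) k := by
  have h1 : ∀ j ∈ range (N+1),
      a.choose (N-j) * b.choose j * (N+j+c).choose k
        = ∑ m ∈ range (k+1), a.choose (N-j) * b.choose j * j.choose m * (N+c).choose (k-m) := by
    intro j _
    rw [show N+j+c = j+(N+c) by omega, Nat.add_choose_eq,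
      Finset.Nat.sum_antidiagonal_eq_sum_range_succ_mk, Finset.mul_sum]
    apply Finset.sum_congr rfl
    intro m _
    ring
  rw [Finset.sum_congr rfl h1, Finset.sum_comm]
  unfold Tseq
  apply Finset.sum_congr rfl
  intro m _
  rw [← Finset.sum_mul, choose_inner_sum hNa hNb m]

theorem S_log_concave (a b N c : ℕ) (hNa : N ≤ a) (hNb : N ≤ b) :
    ∀ k, 1 ≤ k →
      (∑ j ∈ Finset.range (N + 1), a.choose (N - j) * b.choose j * (N + j + c).choose k) ^ 2 ≥
        (∑ j ∈ Finset.range (N + 1),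
            a.choose (N - j) * b.choose j * (N + j + c).choose (k - 1)) *
        (∑ j ∈ Finset.range (N + 1),
            a.choose (N - j) * b.choose j * (N + j + c).choose (k + 1)) := by
  intro k hk
  obtain ⟨k', rfl⟩ : ∃ k', k = k'+1 := ⟨k-1, by omega⟩
  rw [S_eq hNa hNb, S_eq hNa hNb, S_eq hNa hNb]
  simp only [Nat.add_sub_cancel]
  exact (Tseq_props hNa hNb (N+c)).1 k'
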